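/- There is a universal constant C > 0 such that for every Boolean function f : {0,1}^n × {0,1}^n → {0,1} and every δ ∈ (0,1): log srec_{δ,δ}(f) ≤ C · log(1/δ) · log prt_{1/8}(f). -/

import Mathlib

open scoped BigOperators
open scoped Classical

noncomputable section

/-! ## Probability distributions on finite types -/

/-- `p` is a probability distribution on the finite type `α`. -/
def IsDist {α : Type} [Fintype α] (p : α → ℝ) : Prop :=
  (∀ a, 0 ≤ p a) ∧ ∑ a, p a = 1

/-- `μ` (in curried form) is a probability distribution on `X × Y`. -/
def IsDist2 {X Y : Type} [Fintype X] [Fintype Y] (μ : X → Y → ℝ) : Prop :=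
  (∀ x y, 0 ≤ μ x y) ∧ ∑ x, ∑ y, μ x y = 1

/-! ## Deterministic communication protocols -/

/-- A deterministic two-party communication protocol: a finite binary tree where each
internal node is owned by Alice (`nodeA`) or Bob (`nodeB`) and is labeled by a function
of that player's input choosing one of the two children; leaves carry Boolean outputs. -/
inductive Protocol (X Y : Type) : Type
  | leaf : Bool → Protocol X Y
  | nodeA : (X → Bool) → Protocol X Y → Protocol X Y → Protocol X Y
  | nodeB : (Y → Bool) → Protocol X Y → Protocol X Y → Protocol X Y

namespace Protocol

def eval {X Y : Type} : Protocol X Y → X → Y → Bool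
  | leaf b, _, _ => b
  | nodeA g t0 t1, x, y => if g x then eval t1 x y else eval t0 x y
  | nodeB g t0 t1, x, y => if g y then eval t1 x y else eval t0 x y

/-- Depth (number of bits communicated in the worst case). -/
def depth {X Y : Type} : Protocol X Y → ℕ
  | leaf _ => 0
  | nodeA _ t0 t1 => max (depth t0) (depth t1) + 1
  | nodeB _ t0 t1 => max (depth t0) (depth t1) + 1

/-- Number of leaves. -/
def leavesCount {X Y : Type} : Protocol X Y → ℕ
  | leaf _ => 1
  | nodeA _ t0 t1 => leavesCount t0 + leavesCount t1
  | nodeB _ t0 t1 => leavesCount t0 + leavesCount t1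

/-- The sequence of bits communicated on input `(x, y)`. -/
def transcript {X Y : Type} : Protocol X Y → X → Y → List Bool
  | leaf _, _, _ => []
  | nodeA g t0 t1, x, y =>
      if g x then true :: transcript t1 x y else false :: transcript t0 x y
  | nodeB g t0 t1, x, y =>
      if g y then true :: transcript t1 x y else false :: transcript t0 x y

end Protocol

/-- Error of a deterministic protocol w.r.t. input distribution `μ`. -/
def commErr {X Y : Type} [Fintype X] [Fintype Y]
    (μ : X → Y → ℝ) (f : X → Y → Bool) (P : Protocol X Y) : ℝ :=
  ∑ x, ∑ y, if P.eval x y ≠ f x y then μ x y else 0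

/-- Distributional communication complexity `CC^μ_ε(f)`: the minimum depth of a
deterministic protocol erring with probability at most `ε` under `μ`. -/
def CCdist {X Y : Type} [Fintype X] [Fintype Y]
    (μ : X → Y → ℝ) (f : X → Y → Bool) (ε : ℝ) : ℕ :=
  sInf {d : ℕ | ∃ P : Protocol X Y, P.depth ≤ d ∧ commErr μ f P ≤ ε}

/-- The advantage `adv_μ(Π)` of a protocol w.r.t. a (not necessarily normalized) measure. -/
def protAdv {X Y : Type} [Fintype X] [Fintype Y]
    (μ : X → Y → ℝ) (f : X → Y → Bool) (P : Protocol X Y) : ℝ :=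
  ∑ x, ∑ y, if P.eval x y = f x y then μ x y else - μ x y

/-! ## Information complexity -/

/-- Probability of an event under a finite (possibly unnormalized) distribution. -/
def prOf {Ω : Type} [Fintype Ω] (p : Ω → ℝ) (q : Ω → Prop) : ℝ :=
  ∑ ω, if q ω then p ω else 0

/-- Conditional mutual information `I(A ; B | C)` (in bits) of random variables `A`, `B`, `C`
defined on a finite probability space `(Ω, p)`. -/
def condMI {Ω α β γ : Type} [Fintype Ω] (p : Ω → ℝ)
    (A : Ω → α) (B : Ω → β) (C : Ω → γ) : ℝ :=
  ∑ ω, p ω * Real.logb 2 (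
    (prOf p (fun ω' => A ω' = A ω ∧ B ω' = B ω ∧ C ω' = C ω) *
      prOf p (fun ω' => C ω' = C ω)) /
    (prOf p (fun ω' => A ω' = A ω ∧ C ω' = C ω) *
      prOf p (fun ω' => B ω' = B ω ∧ C ω' = C ω)))

/-- Internal information cost `IC^μ(Π) = I(X;T|Y) + I(Y;T|X)` of the public-coin protocol
given by a distribution `ρ` on `Fin m` together with deterministic protocols `P r`; the
transcript `T` consists of the public randomness together with the communicated bits. -/
def infoCost {X Y : Type} [Fintype X] [Fintype Y] (μ : X → Y → ℝ)
    {m : ℕ} (ρ : Fin m → ℝ) (P : Fin m → Protocol X Y) : ℝ :=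
  condMI (fun ω : X × Y × Fin m => μ ω.1 ω.2.1 * ρ ω.2.2)
      (fun ω => ω.1)
      (fun ω => (ω.2.2, (P ω.2.2).transcript ω.1 ω.2.1))
      (fun ω => ω.2.1)
  + condMI (fun ω : X × Y × Fin m => μ ω.1 ω.2.1 * ρ ω.2.2)
      (fun ω => ω.2.1)
      (fun ω => (ω.2.2, (P ω.2.2).transcript ω.1 ω.2.1))
      (fun ω => ω.1)

/-- Error of a public-coin protocol under input distribution `μ` and coin distribution `ρ`. -/
def randErr {X Y : Type} [Fintype X] [Fintype Y] (μ : X → Y → ℝ) (f : X → Y → Bool)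
    {m : ℕ} (ρ : Fin m → ℝ) (P : Fin m → Protocol X Y) : ℝ :=
  ∑ x, ∑ y, ∑ r, if (P r).eval x y ≠ f x y then μ x y * ρ r else 0

/-- `IC^μ_ε(f)`: infimum of the information cost over all public-coin protocols computing
`f` with error at most `ε` under `μ`. -/
def ICmu {X Y : Type} [Fintype X] [Fintype Y]
    (μ : X → Y → ℝ) (f : X → Y → Bool) (ε : ℝ) : ℝ :=
  sInf { c : ℝ | ∃ (m : ℕ) (ρ : Fin m → ℝ) (P : Fin m → Protocol X Y),
    IsDist ρ ∧ randErr μ f ρ P ≤ ε ∧ c = infoCost μ ρ P }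

/-- `IC_ε(f) = max_μ IC^μ_ε(f)`. -/
def IC {X Y : Type} [Fintype X] [Fintype Y] (f : X → Y → Bool) (ε : ℝ) : ℝ :=
  sSup { c : ℝ | ∃ μ : X → Y → ℝ, IsDist2 μ ∧ c = ICmu μ f ε }

/-! ## Rectangles, smooth rectangle bound and partition bound -/

/-- Total weight of rectangles containing `(x, y)`: a combinatorial rectangle is a pair
`R = (S, T)` of finite sets, and `(x,y) ∈ R` iff `x ∈ S ∧ y ∈ T`. -/
def rcov {X Y : Type} [Fintype X] [Fintype Y]
    (w : Finset X × Finset Y → ℝ) (x : X) (y : Y) : ℝ :=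
  ∑ R : Finset X × Finset Y, if x ∈ R.1 ∧ y ∈ R.2 then w R else 0

/-- `μ(R)` for a rectangle `R`. -/
def rMass {X Y : Type} [Fintype X] [Fintype Y]
    (μ : X → Y → ℝ) (R : Finset X × Finset Y) : ℝ :=
  ∑ x, ∑ y, if x ∈ R.1 ∧ y ∈ R.2 then μ x y else 0

/-- `μ_z(R) = μ(R ∩ f⁻¹(z))` for a rectangle `R`. -/
def rMassZ {X Y : Type} [Fintype X] [Fintype Y]
    (μ : X → Y → ℝ) (f : X → Y → Bool) (z : Bool) (R : Finset X × Finset Y) : ℝ :=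
  ∑ x, ∑ y, if (x ∈ R.1 ∧ y ∈ R.2) ∧ f x y = z then μ x y else 0

/-- `μ_z = μ(f⁻¹(z))`. -/
def totalZ {X Y : Type} [Fintype X] [Fintype Y]
    (μ : X → Y → ℝ) (f : X → Y → Bool) (z : Bool) : ℝ :=
  ∑ x, ∑ y, if f x y = z then μ x y else 0

/-- `|μ|`, the total mass of a measure. -/
def totalMass {X Y : Type} [Fintype X] [Fintype Y] (μ : X → Y → ℝ) : ℝ :=
  ∑ x, ∑ y, μ x y

/-- Restriction of a measure to a rectangle. -/
def restrictRect {X Y : Type} (μ : X → Y → ℝ) (R : Finset X × Finset Y) : X → Y → ℝ :=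
  fun x y => if x ∈ R.1 ∧ y ∈ R.2 then μ x y else 0

/-- Distributional smooth rectangle bound `srec^{z,μ}_{ε,δ}(f)` (LP optimal value). -/
def srecZmu {X Y : Type} [Fintype X] [Fintype Y]
    (μ : X → Y → ℝ) (f : X → Y → Bool) (z : Bool) (ε δ : ℝ) : ℝ :=
  sInf { v : ℝ | ∃ w : Finset X × Finset Y → ℝ,
    (∀ R, 0 ≤ w R) ∧
    ((1 - ε) * totalZ μ f z ≤ ∑ x, ∑ y, if f x y = z then μ x y * rcov w x y else 0) ∧
    (∀ x y, f x y ≠ z → rcov w x y ≤ δ) ∧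
    (∀ x y, rcov w x y ≤ 1) ∧
    v = ∑ R : Finset X × Finset Y, w R }

/-- `srec^μ_{ε,δ}(f) = max{srec^{0,μ}_{ε,δ}(f), srec^{1,μ}_{ε,δ}(f)}`. -/
def srecMu {X Y : Type} [Fintype X] [Fintype Y]
    (μ : X → Y → ℝ) (f : X → Y → Bool) (ε δ : ℝ) : ℝ :=
  max (srecZmu μ f false ε δ) (srecZmu μ f true ε δ)

/-- Smooth rectangle bound `srec^z_{ε,δ}(f)` (LP optimal value). -/
def srecZ {X Y : Type} [Fintype X] [Fintype Y]
    (f : X → Y → Bool) (z : Bool) (ε δ : ℝ) : ℝ :=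
  sInf { v : ℝ | ∃ w : Finset X × Finset Y → ℝ,
    (∀ R, 0 ≤ w R) ∧
    (∀ x y, f x y = z → 1 - ε ≤ rcov w x y) ∧
    (∀ x y, f x y ≠ z → rcov w x y ≤ δ) ∧
    (∀ x y, rcov w x y ≤ 1) ∧
    v = ∑ R : Finset X × Finset Y, w R }

/-- `srec_{ε,δ}(f) = max{srec^0_{ε,δ}(f), srec^1_{ε,δ}(f)}`. -/
def srec {X Y : Type} [Fintype X] [Fintype Y] (f : X → Y → Bool) (ε δ : ℝ) : ℝ :=
  max (srecZ f false ε δ) (srecZ f true ε δ)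

/-- Partition bound `prt_ε(f)` (LP optimal value). -/
def prt {X Y : Type} [Fintype X] [Fintype Y] (f : X → Y → Bool) (ε : ℝ) : ℝ :=
  sInf { v : ℝ | ∃ w : Bool → Finset X × Finset Y → ℝ,
    (∀ z R, 0 ≤ w z R) ∧
    (∀ x y, 1 - ε ≤ rcov (w (f x y)) x y) ∧
    (∀ x y, rcov (w false) x y + rcov (w true) x y = 1) ∧
    v = ∑ R : Finset X × Finset Y, (w false R + w true R) }

/-! ### General-output versions -/

/-- Smooth rectangle bound `srec^z_{ε,δ}(f)` for general output alphabet. -/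
def srecZgen {X Y Z : Type} [Fintype X] [Fintype Y]
    (f : X → Y → Z) (z : Z) (ε δ : ℝ) : ℝ :=
  sInf { v : ℝ | ∃ w : Finset X × Finset Y → ℝ,
    (∀ R, 0 ≤ w R) ∧
    (∀ x y, f x y = z → 1 - ε ≤ rcov w x y) ∧
    (∀ x y, f x y ≠ z → rcov w x y ≤ δ) ∧
    (∀ x y, rcov w x y ≤ 1) ∧
    v = ∑ R : Finset X × Finset Y, w R }

/-- `srec_{ε,δ}(f) = max_{z ∈ Z} srec^z_{ε,δ}(f)`. -/
def srecGen {X Y Z : Type} [Fintype X] [Fintype Y] [Fintype Z]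
    (f : X → Y → Z) (ε δ : ℝ) : ℝ :=
  sSup (Set.range fun z : Z => srecZgen f z ε δ)

/-- Distributional smooth rectangle bound for general output alphabet. -/
def srecZmuGen {X Y Z : Type} [Fintype X] [Fintype Y]
    (μ : X → Y → ℝ) (f : X → Y → Z) (z : Z) (ε δ : ℝ) : ℝ :=
  sInf { v : ℝ | ∃ w : Finset X × Finset Y → ℝ,
    (∀ R, 0 ≤ w R) ∧
    ((1 - ε) * (∑ x, ∑ y, if f x y = z then μ x y else 0) ≤
      ∑ x, ∑ y, if f x y = z then μ x y * rcov w x y else 0) ∧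
    (∀ x y, f x y ≠ z → rcov w x y ≤ δ) ∧
    (∀ x y, rcov w x y ≤ 1) ∧
    v = ∑ R : Finset X × Finset Y, w R }

/-- `srec^μ_{ε,δ}(f) = max_{z ∈ Z} srec^{z,μ}_{ε,δ}(f)`. -/
def srecMuGen {X Y Z : Type} [Fintype X] [Fintype Y] [Fintype Z]
    (μ : X → Y → ℝ) (f : X → Y → Z) (ε δ : ℝ) : ℝ :=
  sSup (Set.range fun z : Z => srecZmuGen μ f z ε δ)

/-- Partition bound for general output alphabet. -/
def prtGen {X Y Z : Type} [Fintype X] [Fintype Y] [Fintype Z]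
    (f : X → Y → Z) (ε : ℝ) : ℝ :=
  sInf { v : ℝ | ∃ w : Z → Finset X × Finset Y → ℝ,
    (∀ z R, 0 ≤ w z R) ∧
    (∀ x y, 1 - ε ≤ rcov (w (f x y)) x y) ∧
    (∀ x y, (∑ z : Z, rcov (w z) x y) = 1) ∧
    v = ∑ z : Z, ∑ R : Finset X × Finset Y, w z R }

/-! ## Decision trees, subcubes and the query partition bound -/

/-- Deterministic decision trees on `n` input bits. -/
inductive DTree (n : ℕ) : Type
  | leaf : Bool → DTree n
  | node : Fin n → DTree n → DTree n → DTree n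

def DTree.eval {n : ℕ} : DTree n → (Fin n → Bool) → Bool
  | .leaf b, _ => b
  | .node i t0 t1, x => if x i then DTree.eval t1 x else DTree.eval t0 x

def DTree.depth {n : ℕ} : DTree n → ℕ
  | .leaf _ => 0
  | .node _ t0 t1 => max (DTree.depth t0) (DTree.depth t1) + 1

/-- Error of a decision tree w.r.t. the input distribution `μ`. -/
def qErr {n : ℕ} (μ : (Fin n → Bool) → ℝ) (g : (Fin n → Bool) → Bool) (T : DTree n) : ℝ :=
  ∑ x, if T.eval x ≠ g x then μ x else 0

/-- Distributional query complexity `QC^μ_ε(g)`: minimum depth of a deterministic decision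
tree erring with probability at most `ε` under `μ`. -/
def QCdist {n : ℕ} (μ : (Fin n → Bool) → ℝ) (g : (Fin n → Bool) → Bool) (ε : ℝ) : ℕ :=
  sInf {d : ℕ | ∃ T : DTree n, T.depth ≤ d ∧ qErr μ g T ≤ ε}

/-- A subcube of `{0,1}ⁿ`, given by its support pattern `s ∈ {0,1,⋆}ⁿ`. -/
abbrev Subcube (n : ℕ) := Fin n → Option Bool

/-- Membership in a subcube. -/
def memCube {n : ℕ} (A : Subcube n) (x : Fin n → Bool) : Prop :=
  ∀ i, ∀ b, A i = some b → x i = b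

/-- Size of (the support of) a subcube. -/
def cubeSize {n : ℕ} (A : Subcube n) : ℕ :=
  (Finset.univ.filter fun i => (A i).isSome).card

/-- Total weight of subcubes containing `x`. -/
def cubeCov {n : ℕ} (w : Subcube n → ℝ) (x : Fin n → Bool) : ℝ :=
  ∑ A : Subcube n, if memCube A x then w A else 0

/-- Query partition bound `qprt_ε(g)` (LP optimal value). -/
def qprt {n : ℕ} (g : (Fin n → Bool) → Bool) (ε : ℝ) : ℝ :=
  sInf { v : ℝ | ∃ w : Bool → Subcube n → ℝ,
    (∀ z A, 0 ≤ w z A) ∧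
    (∀ x, 1 - ε ≤ cubeCov (w (g x)) x) ∧
    (∀ x, cubeCov (w false) x + cubeCov (w true) x = 1) ∧
    v = ∑ A : Subcube n, (w false A + w true A) * 2 ^ cubeSize A }

/-- The bit-wise product distribution on `{0,1}ⁿ` with `p_i(1) = p i`, `p_i(0) = 1 - p i`. -/
def bitProd {n : ℕ} (p : Fin n → ℝ) : (Fin n → Bool) → ℝ :=
  fun x => ∏ i, if x i then p i else 1 - p i

/-- `μ(A)` for a subcube (or any set given by a membership predicate). -/
def cubeMass {n : ℕ} (μ : (Fin n → Bool) → ℝ) (A : Subcube n) : ℝ :=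
  ∑ x, if memCube A x then μ x else 0

/-- `μ_z(A) = μ(A ∩ g⁻¹(z))` for a subcube `A`. -/
def cubeMassZ {n : ℕ} (μ : (Fin n → Bool) → ℝ) (g : (Fin n → Bool) → Bool)
    (z : Bool) (A : Subcube n) : ℝ :=
  ∑ x, if memCube A x ∧ g x = z then μ x else 0

/-- `μ_z = μ(g⁻¹(z))`. -/
def qTotalZ {n : ℕ} (μ : (Fin n → Bool) → ℝ) (g : (Fin n → Bool) → Bool) (z : Bool) : ℝ :=
  ∑ x, if g x = z then μ x else 0

/-- Mass of a finite set of pairs under the product measure `μA ⊗ μB`. -/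
def pairMass {X Y : Type} (μA : X → ℝ) (μB : Y → ℝ) (A : Finset (X × Y)) : ℝ :=
  ∑ q ∈ A, μA q.1 * μB q.2

end


/-! ## Auxiliary development for the proof -/

noncomputable section AuxProof
open Finset

variable {X Y : Type} [Fintype X] [Fintype Y]

/-- Majority of a tuple of booleans. -/
private def majFun {k : ℕ} (ζ : Fin k → Bool) : Bool :=
  decide (k < 2 * (Finset.univ.filter fun i => ζ i = true).card)

private lemma prod_ite_all {ι : Type} [Fintype ι] (P : ι → Prop) (a : ι → ℝ) :
    (∏ i, if P i then a i else 0) = if (∀ i, P i) then ∏ i, a i else 0 := by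
  by_cases h : ∀ i, P i
  · rw [if_pos h]; exact Finset.prod_congr rfl fun i _ => if_pos (h i)
  · rw [if_neg h]
    push_neg at h; obtain ⟨i0, hi0⟩ := h
    exact Finset.prod_eq_zero (mem_univ i0) (if_neg hi0)

private lemma rcov_nonneg {w : Finset X × Finset Y → ℝ} (h : ∀ R, 0 ≤ w R) (x : X) (y : Y) :
    0 ≤ rcov w x y := by
  unfold rcov
  exact Finset.sum_nonneg fun R _ => by split_ifs with hR; exacts [h R, le_rfl]

private lemma rcov_le_total {w : Finset X × Finset Y → ℝ} (h : ∀ R, 0 ≤ w R) (x : X) (y : Y) :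
    rcov w x y ≤ ∑ R : Finset X × Finset Y, w R := by
  unfold rcov
  exact Finset.sum_le_sum fun R _ => by split_ifs with hR; exacts [le_rfl, h R]

private lemma rcov_singW (f : X → Y → Bool) (z : Bool) (x : X) (y : Y) :
    rcov (fun R => ∑ a : X, if R = ({a}, Finset.univ.filter fun b => f a b = z) then (1:ℝ) else 0) x y
      = if f x y = z then 1 else 0 := by
  unfold rcov
  have h1 : ∀ R : Finset X × Finset Y,
      (if x ∈ R.1 ∧ y ∈ R.2 then
        (∑ a : X, if R = ({a}, Finset.univ.filter fun b => f a b = z) then (1:ℝ) else 0) else 0)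
      = ∑ a : X, if (R = ({a}, Finset.univ.filter fun b => f a b = z)) ∧ x ∈ R.1 ∧ y ∈ R.2
          then (1:ℝ) else 0 := by
    intro R
    by_cases hm : x ∈ R.1 ∧ y ∈ R.2
    · rw [if_pos hm]
      exact Finset.sum_congr rfl fun a _ => by
        by_cases hR : R = ({a}, Finset.univ.filter fun b => f a b = z)
        · rw [if_pos hR, if_pos ⟨hR, hm⟩]
        · rw [if_neg hR, if_neg (by tauto)]
    · rw [if_neg hm]
      exact (Finset.sum_eq_zero fun a _ => by rw [if_neg (by tauto)]).symm
  simp only [h1]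
  rw [Finset.sum_comm]
  have h2 : ∀ a : X,
      (∑ R : Finset X × Finset Y,
        if (R = ({a}, Finset.univ.filter fun b => f a b = z)) ∧ x ∈ R.1 ∧ y ∈ R.2
          then (1:ℝ) else 0)
      = if x = a ∧ f a y = z then 1 else 0 := by
    intro a
    have h3 : ∀ R : Finset X × Finset Y,
        (if (R = ({a}, Finset.univ.filter fun b => f a b = z)) ∧ x ∈ R.1 ∧ y ∈ R.2
          then (1:ℝ) else 0)
        = if R = ({a}, Finset.univ.filter fun b => f a b = z) then
            (if x ∈ ({a} : Finset X) ∧ y ∈ (Finset.univ.filter fun b => f a b = z) then (1:ℝ) else 0)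
          else 0 := by
      intro R
      by_cases hR : R = ({a}, Finset.univ.filter fun b => f a b = z)
      · subst hR; simp
      · rw [if_neg hR, if_neg (by tauto)]
    simp only [h3]
    rw [Finset.sum_ite_eq' Finset.univ]
    simp only [Finset.mem_univ, if_true, Finset.mem_singleton, Finset.mem_filter, true_and]
  simp only [h2]
  have h4 : ∀ a : X, (if x = a ∧ f a y = z then (1:ℝ) else 0)
      = if x = a then (if f a y = z then (1:ℝ) else 0) else 0 := by
    intro a; by_cases h : x = a <;> simp [h]
  simp only [h4]
  rw [Finset.sum_ite_eq Finset.univ x fun a => if f a y = z then (1:ℝ) else 0]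
  simp

/-- The intersection rectangle of a tuple of labeled rectangles. -/
private def interR {k : ℕ} (p : Fin k → Bool × (Finset X × Finset Y)) :
    Finset X × Finset Y :=
  (Finset.univ.filter fun a => ∀ i, a ∈ (p i).2.1,
   Finset.univ.filter fun b => ∀ i, b ∈ (p i).2.2)

/-- The amplified weight function. -/
private def ampW (w : Bool → Finset X × Finset Y → ℝ) (z : Bool) (k : ℕ) :
    Finset X × Finset Y → ℝ := fun R =>
  ∑ p : Fin k → Bool × (Finset X × Finset Y),
    if majFun (fun i => (p i).1) = z ∧ R = interR p then ∏ i, w (p i).1 (p i).2 else 0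

private lemma ampW_nonneg {w : Bool → Finset X × Finset Y → ℝ} (h0 : ∀ z R, 0 ≤ w z R)
    (z : Bool) (k : ℕ) (R : Finset X × Finset Y) : 0 ≤ ampW w z k R := by
  refine Finset.sum_nonneg fun p _ => ?_
  split_ifs with h
  · exact Finset.prod_nonneg fun i _ => h0 _ _
  · exact le_rfl

private lemma rcov_ampW (w : Bool → Finset X × Finset Y → ℝ) (z : Bool) (k : ℕ)
    (x : X) (y : Y) :
    rcov (ampW w z k) x y
      = ∑ ζ : Fin k → Bool, if majFun ζ = z then ∏ i, rcov (w (ζ i)) x y else 0 := by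
  unfold rcov
  have step1 : ∀ R : Finset X × Finset Y,
      (if x ∈ R.1 ∧ y ∈ R.2 then ampW w z k R else 0)
      = ∑ p : Fin k → Bool × (Finset X × Finset Y),
          if R = interR p then
            (if majFun (fun i => (p i).1) = z ∧ x ∈ (interR p).1 ∧ y ∈ (interR p).2
              then ∏ i, w (p i).1 (p i).2 else 0)
          else 0 := by
    intro R
    by_cases hmem : x ∈ R.1 ∧ y ∈ R.2
    · rw [if_pos hmem]
      refine Finset.sum_congr rfl fun p _ => ?_
      by_cases hR : R = interR p
      · rw [if_pos hR, ← hR]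
        by_cases hmaj : majFun (fun i => (p i).1) = z
        · rw [if_pos ⟨hmaj, rfl⟩, if_pos ⟨hmaj, hmem⟩]
        · rw [if_neg (by tauto), if_neg (by tauto)]
      · rw [if_neg hR, if_neg (by tauto)]
    · rw [if_neg hmem]
      refine (Finset.sum_eq_zero fun p _ => ?_).symm
      by_cases hR : R = interR p
      · rw [if_pos hR, if_neg]
        rw [← hR]; tauto
      · rw [if_neg hR]
  simp only [step1]
  rw [Finset.sum_comm]
  have step2 : ∀ p : Fin k → Bool × (Finset X × Finset Y),
      (∑ R : Finset X × Finset Y,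
        if R = interR p then
          (if majFun (fun i => (p i).1) = z ∧ x ∈ (interR p).1 ∧ y ∈ (interR p).2
            then ∏ i, w (p i).1 (p i).2 else 0)
        else 0)
      = if majFun (fun i => (p i).1) = z ∧ (∀ i, x ∈ (p i).2.1) ∧ (∀ i, y ∈ (p i).2.2)
          then ∏ i, w (p i).1 (p i).2 else 0 := by
    intro p
    rw [Finset.sum_ite_eq' Finset.univ]
    simp only [Finset.mem_univ, if_true, interR, Finset.mem_filter, true_and]
  simp only [step2]
  have := Equiv.sum_comp (Equiv.arrowProdEquivProdArrow (Fin k) (fun _ => Bool) (fun _ => Finset X × Finset Y)).symm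
    (fun p : Fin k → Bool × (Finset X × Finset Y) =>
      if majFun (fun i => (p i).1) = z ∧ (∀ i, x ∈ (p i).2.1) ∧ (∀ i, y ∈ (p i).2.2)
        then ∏ i, w (p i).1 (p i).2 else 0)
  rw [← this, Fintype.sum_prod_type]
  refine Finset.sum_congr rfl fun ζ _ => ?_
  by_cases hmaj : majFun ζ = z
  · simp only [Equiv.arrowProdEquivProdArrow, Equiv.coe_fn_symm_mk, hmaj, true_and, if_true]
    have h5 : ∀ ρ : Fin k → Finset X × Finset Y,
        (if (∀ i, x ∈ (ρ i).1) ∧ (∀ i, y ∈ (ρ i).2) then ∏ i, w (ζ i) (ρ i) else 0)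
        = ∏ i, if x ∈ (ρ i).1 ∧ y ∈ (ρ i).2 then w (ζ i) (ρ i) else 0 := by
      intro ρ
      by_cases h : (∀ i, x ∈ (ρ i).1) ∧ (∀ i, y ∈ (ρ i).2)
      · rw [if_pos h]
        exact (Finset.prod_congr rfl fun i _ => (if_pos ⟨h.1 i, h.2 i⟩).symm)
      · rw [if_neg h]
        rw [not_and_or] at h
        have hex : ∃ i, ¬ (x ∈ (ρ i).1 ∧ y ∈ (ρ i).2) := by
          rcases h with h | h <;> push_neg at h <;> obtain ⟨i, hi⟩ := h
          · exact ⟨i, fun hc => hi hc.1⟩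
          · exact ⟨i, fun hc => hi hc.2⟩
        obtain ⟨i0, hi0⟩ := hex
        have hz0 : (∏ i, if x ∈ (ρ i).1 ∧ y ∈ (ρ i).2 then w (ζ i) (ρ i) else 0) = 0 :=
          Finset.prod_eq_zero (Finset.mem_univ i0) (if_neg hi0)
        rw [hz0]
    simp only [h5]
    rw [eq_comm]
    rw [Finset.prod_univ_sum (fun _ => (Finset.univ : Finset (Finset X × Finset Y)))
      (fun i R => if x ∈ R.1 ∧ y ∈ R.2 then w (ζ i) R else 0)]
    rw [Fintype.piFinset_univ]
  · rw [if_neg hmaj]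
    exact Finset.sum_eq_zero fun ρ _ => if_neg fun hc => hmaj hc.1

private lemma sum_ampW_le {w : Bool → Finset X × Finset Y → ℝ} (h0 : ∀ z R, 0 ≤ w z R)
    (z : Bool) (k : ℕ) :
    ∑ R : Finset X × Finset Y, ampW w z k R
      ≤ (∑ R : Finset X × Finset Y, (w false R + w true R)) ^ k := by
  unfold ampW
  rw [Finset.sum_comm]
  have step : ∀ p : Fin k → Bool × (Finset X × Finset Y),
      (∑ R : Finset X × Finset Y,
        if majFun (fun i => (p i).1) = z ∧ R = interR p then ∏ i, w (p i).1 (p i).2 else 0)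
      ≤ ∏ i, w (p i).1 (p i).2 := by
    intro p
    have h3 : ∀ R : Finset X × Finset Y,
        (if majFun (fun i => (p i).1) = z ∧ R = interR p then ∏ i, w (p i).1 (p i).2 else 0)
        = if R = interR p then
            (if majFun (fun i => (p i).1) = z then ∏ i, w (p i).1 (p i).2 else 0) else 0 := by
      intro R
      by_cases hR : R = interR p
      · by_cases hmaj : majFun (fun i => (p i).1) = z
        · rw [if_pos ⟨hmaj, hR⟩, if_pos hR, if_pos hmaj]
        · rw [if_neg (by tauto), if_pos hR, if_neg hmaj]
      · rw [if_neg (by tauto), if_neg hR]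
    simp only [h3]
    rw [Finset.sum_ite_eq' Finset.univ]
    simp only [Finset.mem_univ, if_true]
    split_ifs with h
    · exact le_rfl
    · exact Finset.prod_nonneg fun i _ => h0 _ _
  calc (∑ p : Fin k → Bool × (Finset X × Finset Y),
          ∑ R : Finset X × Finset Y,
            if majFun (fun i => (p i).1) = z ∧ R = interR p then ∏ i, w (p i).1 (p i).2 else 0)
      ≤ ∑ p : Fin k → Bool × (Finset X × Finset Y), ∏ i, w (p i).1 (p i).2 :=
        Finset.sum_le_sum fun p _ => step p
    _ = (∑ R : Finset X × Finset Y, (w false R + w true R)) ^ k := by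
        have h6 : (∑ q : Bool × (Finset X × Finset Y), w q.1 q.2)
            = ∑ R : Finset X × Finset Y, (w false R + w true R) := by
          rw [Fintype.sum_prod_type]
          rw [Fintype.sum_bool]
          rw [← Finset.sum_add_distrib]
          exact Finset.sum_congr rfl fun R _ => by ring
        rw [← h6]
        have h7 := Finset.prod_univ_sum (fun _ : Fin k => (Finset.univ : Finset (Bool × (Finset X × Finset Y))))
          (fun _ q => w q.1 q.2)
        rw [Fintype.piFinset_univ] at h7
        rw [← h7, Finset.prod_const, Finset.card_univ, Fintype.card_fin]

private lemma ite_maj_add {k : ℕ} (ζ : Fin k → Bool) (z : Bool) (t : ℝ) :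
    (if majFun ζ = z then t else 0) + (if majFun ζ = !z then t else 0) = t := by
  cases h : majFun ζ <;> cases z <;> simp [h]

private lemma sum_all_patterns {k : ℕ} (c : Bool → ℝ) (hsum : c false + c true = 1) :
    ∑ ζ : Fin k → Bool, ∏ i, c (ζ i) = 1 := by
  have h7 := Finset.prod_univ_sum (fun _ : Fin k => (Finset.univ : Finset Bool))
    (fun _ b => c b)
  rw [Fintype.piFinset_univ] at h7
  rw [← h7]
  have : (∑ b : Bool, c b) = 1 := by rw [Fintype.sum_bool]; linarith
  rw [this]
  exact Finset.prod_const_one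

private lemma bad_bound {m : ℕ} (c : Bool → ℝ) (hnn : ∀ b, 0 ≤ c b)
    (hsum : c false + c true = 1) (z0 : Bool) (hgood : (7:ℝ)/8 ≤ c z0)
    (z : Bool) (hz : z ≠ z0) :
    (∑ ζ : Fin (2*m) → Bool, if majFun ζ = z then ∏ i, c (ζ i) else 0) ≤ (2:ℝ)⁻¹ ^ m := by
  have hle1 : ∀ b, c b ≤ 1 := by
    intro b; cases b
    · have := hnn true; linarith
    · have := hnn false; linarith
  have hbadc : c (!z0) ≤ 8⁻¹ := by
    cases z0 <;> simp only [Bool.not_false, Bool.not_true] <;> linarith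
  -- key pointwise bound
  have key : ∀ ζ : Fin (2*m) → Bool, majFun ζ = z → (∏ i, c (ζ i)) ≤ (8:ℝ)⁻¹ ^ m := by
    intro ζ hmaj
    set Wr := (Finset.univ.filter fun i => ¬ (ζ i = z0)).card with hWr
    have hcard : (Finset.univ.filter fun i => ζ i = z0).card + Wr = 2*m := by
      rw [hWr]
      rw [Finset.card_filter_add_card_filter_not]
      simp
    have hWm : m ≤ Wr := by
      have hmaj' : majFun ζ ≠ z0 := by rw [hmaj]; exact hz
      unfold majFun at hmaj'
      cases hz0 : z0
      · -- z0 = false, so majFun ζ = true : 2*m < 2 * #true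
        rw [hz0] at hmaj'
        have htrue : 2*m < 2 * (Finset.univ.filter fun i => ζ i = true).card := by
          by_contra hc
          exact hmaj' (by simp [hc])
        have : (Finset.univ.filter fun i => ζ i = true) = (Finset.univ.filter fun i => ¬ (ζ i = false)) := by
          apply Finset.filter_congr; intro i _; simp
        rw [this] at htrue
        rw [hz0] at hWr
        omega
      · -- z0 = true, majFun ζ = false: ¬ (2m < 2 #true)
        rw [hz0] at hmaj'
        have htrue : ¬ (2*m < 2 * (Finset.univ.filter fun i => ζ i = true).card) := by
          intro hc
          exact hmaj' (by simp [hc])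
        rw [hz0] at hcard
        omega
    have hprod : (∏ i, c (ζ i)) ≤ ∏ i, (if ζ i = z0 then (1:ℝ) else 8⁻¹) := by
      refine Finset.prod_le_prod (fun i _ => hnn _) fun i _ => ?_
      by_cases h : ζ i = z0
      · rw [if_pos h, h]; exact hle1 z0
      · rw [if_neg h]
        have : ζ i = !z0 := by cases hb : ζ i <;> cases hz0 : z0 <;> simp_all
        rw [this]; exact hbadc
    have hprod2 : (∏ i, (if ζ i = z0 then (1:ℝ) else 8⁻¹)) = (8:ℝ)⁻¹ ^ Wr := by
      rw [Finset.prod_ite]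
      simp [hWr]
    calc (∏ i, c (ζ i)) ≤ (8:ℝ)⁻¹ ^ Wr := by rw [← hprod2]; exact hprod
      _ ≤ (8:ℝ)⁻¹ ^ m := pow_le_pow_of_le_one (by norm_num) (by norm_num) hWm
  calc (∑ ζ : Fin (2*m) → Bool, if majFun ζ = z then ∏ i, c (ζ i) else 0)
      ≤ ∑ _ζ : Fin (2*m) → Bool, (8:ℝ)⁻¹ ^ m := by
        refine Finset.sum_le_sum fun ζ _ => ?_
        split_ifs with h
        · exact key ζ h
        · positivity
    _ = (Fintype.card (Fin (2*m) → Bool) : ℝ) * (8:ℝ)⁻¹ ^ m := by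
        rw [Finset.sum_const, Finset.card_univ, nsmul_eq_mul]
    _ = (2:ℝ) ^ (2*m) * (8:ℝ)⁻¹ ^ m := by
        norm_num [Fintype.card_fun]
    _ = (2:ℝ)⁻¹ ^ m := by
        rw [pow_mul]
        rw [← mul_pow]
        norm_num

private lemma mem_srecZ_set_nonneg {f : X → Y → Bool} {z : Bool} {ε δ v : ℝ}
    (hv : v ∈ { v : ℝ | ∃ w : Finset X × Finset Y → ℝ,
      (∀ R, 0 ≤ w R) ∧
      (∀ x y, f x y = z → 1 - ε ≤ rcov w x y) ∧
      (∀ x y, f x y ≠ z → rcov w x y ≤ δ) ∧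
      (∀ x y, rcov w x y ≤ 1) ∧
      v = ∑ R : Finset X × Finset Y, w R }) : 0 ≤ v := by
  obtain ⟨w, h0, _, _, _, hveq⟩ := hv
  rw [hveq]
  exact Finset.sum_nonneg fun R _ => h0 R

private lemma srecZ_bddBelow (f : X → Y → Bool) (z : Bool) (ε δ : ℝ) :
    BddBelow { v : ℝ | ∃ w : Finset X × Finset Y → ℝ,
      (∀ R, 0 ≤ w R) ∧
      (∀ x y, f x y = z → 1 - ε ≤ rcov w x y) ∧
      (∀ x y, f x y ≠ z → rcov w x y ≤ δ) ∧
      (∀ x y, rcov w x y ≤ 1) ∧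
      v = ∑ R : Finset X × Finset Y, w R } :=
  ⟨0, fun _ hv => mem_srecZ_set_nonneg hv⟩

set_option maxHeartbeats 800000 in
/-- Main amplification step. -/
private lemma srecZ_le_pow (f : X → Y → Bool) {δ : ℝ} (hδ0 : 0 < δ)
    (w : Bool → Finset X × Finset Y → ℝ)
    (h0 : ∀ z R, 0 ≤ w z R)
    (h1 : ∀ x y, (7:ℝ)/8 ≤ rcov (w (f x y)) x y)
    (h2 : ∀ x y, rcov (w false) x y + rcov (w true) x y = 1)
    (z : Bool) (m : ℕ) (hm : ((2:ℝ))⁻¹ ^ m ≤ δ) :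
    srecZ f z δ δ ≤ (∑ R : Finset X × Finset Y, (w false R + w true R)) ^ (2 * m) := by
  have hrnn : ∀ b x y, 0 ≤ rcov (w b) x y := fun b x y => rcov_nonneg (h0 b) x y
  -- pointwise coverage facts for ampW
  have hcov : ∀ (z' : Bool) (x : X) (y : Y), f x y ≠ z' →
      rcov (ampW w z' (2*m)) x y ≤ δ := by
    intro z' x y hne
    rw [rcov_ampW]
    refine le_trans (bad_bound (fun b => rcov (w b) x y) (fun b => hrnn b x y)
      (h2 x y) (f x y) (h1 x y) z' (fun h => hne h.symm)) hm
  have hcovle1 : ∀ (z' : Bool) (x : X) (y : Y), rcov (ampW w z' (2*m)) x y ≤ 1 := by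
    intro z' x y
    rw [rcov_ampW]
    calc (∑ ζ : Fin (2*m) → Bool, if majFun ζ = z' then ∏ i, rcov (w (ζ i)) x y else 0)
        ≤ ∑ ζ : Fin (2*m) → Bool, ∏ i, rcov (w (ζ i)) x y := by
          refine Finset.sum_le_sum fun ζ _ => ?_
          split_ifs with h
          · exact le_rfl
          · exact Finset.prod_nonneg fun i _ => hrnn _ x y
      _ = 1 := sum_all_patterns (fun b => rcov (w b) x y) (h2 x y)
  have hcovgood : ∀ (x : X) (y : Y), f x y = z →
      1 - δ ≤ rcov (ampW w z (2*m)) x y := by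
    intro x y hfz
    rw [rcov_ampW]
    have hsplit : (∑ ζ : Fin (2*m) → Bool, if majFun ζ = z then ∏ i, rcov (w (ζ i)) x y else 0)
        + (∑ ζ : Fin (2*m) → Bool, if majFun ζ = !z then ∏ i, rcov (w (ζ i)) x y else 0) = 1 := by
      rw [← Finset.sum_add_distrib]
      rw [Finset.sum_congr rfl fun ζ _ => ite_maj_add ζ z (∏ i, rcov (w (ζ i)) x y)]
      exact sum_all_patterns (fun b => rcov (w b) x y) (h2 x y)
    have hbad : (∑ ζ : Fin (2*m) → Bool, if majFun ζ = !z then ∏ i, rcov (w (ζ i)) x y else 0) ≤ δ := by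
      refine le_trans (bad_bound (fun b => rcov (w b) x y) (fun b => hrnn b x y)
        (h2 x y) (f x y) (h1 x y) (!z) ?_) hm
      rw [hfz]; simp
    linarith
  -- conclude by exhibiting ampW as a feasible solution
  unfold srecZ
  refine le_trans (csInf_le (srecZ_bddBelow f z δ δ) ?_) (sum_ampW_le h0 z (2*m))
  exact ⟨ampW w z (2*m), ampW_nonneg h0 z (2*m), hcovgood,
    (fun x y h => hcov z x y h), hcovle1 z, rfl⟩

private lemma le_pow_csInf {S : Set ℝ} (hne : S.Nonempty) (h1 : ∀ v ∈ S, (1:ℝ) ≤ v)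
    (k : ℕ) {a : ℝ} (ha : ∀ v ∈ S, a ≤ v ^ k) : a ≤ (sInf S) ^ k := by
  by_contra hcon
  push_neg at hcon
  have hbdd : BddBelow S := ⟨1, fun v hv => h1 v hv⟩
  have hPle : ∀ v ∈ S, sInf S ≤ v := fun v hv => csInf_le hbdd hv
  have hc : ContinuousAt (fun x : ℝ => x ^ k) (sInf S) := (continuous_pow k).continuousAt
  rw [Metric.continuousAt_iff] at hc
  obtain ⟨η, hη, hball⟩ := hc (a - (sInf S) ^ k) (by linarith)
  obtain ⟨v, hvS, hv⟩ := exists_lt_of_csInf_lt hne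
    (show sInf S < sInf S + η by linarith)
  have h5 := hball (x := v) (by
    rw [Real.dist_eq, abs_lt]
    constructor
    · linarith [hPle v hvS]
    · linarith [hPle v hvS])
  rw [Real.dist_eq, abs_lt] at h5
  have := ha v hvS
  linarith [h5.2]

private lemma srecZ_nonneg (f : X → Y → Bool) (z : Bool) (ε δ : ℝ) : 0 ≤ srecZ f z ε δ := by
  unfold srecZ
  exact Real.sInf_nonneg fun v hv => mem_srecZ_set_nonneg hv

private lemma mem_prtSet_one_le [Nonempty X] [Nonempty Y] {f : X → Y → Bool} {ε v : ℝ}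
    (hv : v ∈ { v : ℝ | ∃ w : Bool → Finset X × Finset Y → ℝ,
      (∀ z R, 0 ≤ w z R) ∧
      (∀ x y, 1 - ε ≤ rcov (w (f x y)) x y) ∧
      (∀ x y, rcov (w false) x y + rcov (w true) x y = 1) ∧
      v = ∑ R : Finset X × Finset Y, (w false R + w true R) }) : 1 ≤ v := by
  obtain ⟨w, h0, _, h2, hveq⟩ := hv
  obtain ⟨x0⟩ := (inferInstance : Nonempty X)
  obtain ⟨y0⟩ := (inferInstance : Nonempty Y)
  have h3 : rcov (w false) x0 y0 + rcov (w true) x0 y0 ≤ v := by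
    rw [hveq, Finset.sum_add_distrib]
    exact add_le_add (rcov_le_total (h0 false) x0 y0) (rcov_le_total (h0 true) x0 y0)
  have := h2 x0 y0
  linarith

private lemma prtSet_nonempty (f : X → Y → Bool) {ε : ℝ} (hε : 0 ≤ ε) :
    Set.Nonempty { v : ℝ | ∃ w : Bool → Finset X × Finset Y → ℝ,
      (∀ z R, 0 ≤ w z R) ∧
      (∀ x y, 1 - ε ≤ rcov (w (f x y)) x y) ∧
      (∀ x y, rcov (w false) x y + rcov (w true) x y = 1) ∧
      v = ∑ R : Finset X × Finset Y, (w false R + w true R) } := by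
  refine ⟨_, fun z R => ∑ a : X, if R = ({a}, Finset.univ.filter fun b => f a b = z) then (1:ℝ) else 0,
    fun z R => Finset.sum_nonneg fun a _ => by split_ifs <;> norm_num, ?_, ?_, rfl⟩
  · intro x y
    rw [rcov_singW f (f x y) x y]
    rw [if_pos rfl]
    linarith
  · intro x y
    rw [rcov_singW f false x y, rcov_singW f true x y]
    cases h : f x y <;> simp [h]

private lemma srecZ_le_self (f : X → Y → Bool) {δ : ℝ} (h1 : 1/2 ≤ δ) (h2 : δ ≤ 1) (z : Bool) :
    srecZ f z δ δ ≤ δ := by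
  have hδ0 : (0:ℝ) ≤ δ := by linarith
  have hrc : ∀ x y, rcov (fun R : Finset X × Finset Y =>
      if R = (Finset.univ, Finset.univ) then δ else 0) x y = δ := by
    intro x y
    unfold rcov
    have h3 : ∀ R : Finset X × Finset Y,
        (if x ∈ R.1 ∧ y ∈ R.2 then (if R = (Finset.univ, Finset.univ) then δ else 0) else 0)
        = if R = (Finset.univ, Finset.univ) then δ else 0 := by
      intro R
      by_cases hR : R = (Finset.univ, Finset.univ)
      · subst hR; simp
      · simp [hR]
    simp only [h3]
    rw [Finset.sum_ite_eq' Finset.univ]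
    simp
  have hval : (∑ R : Finset X × Finset Y, if R = (Finset.univ, Finset.univ) then δ else 0) = δ := by
    rw [Finset.sum_ite_eq' Finset.univ]
    simp
  unfold srecZ
  refine csInf_le (srecZ_bddBelow f z δ δ) ?_
  refine ⟨fun R => if R = (Finset.univ, Finset.univ) then δ else 0,
    fun R => by dsimp only; split_ifs <;> simp [hδ0], ?_, ?_, ?_, hval.symm⟩
  · intro x y _; rw [hrc]; linarith
  · intro x y _; rw [hrc]
  · intro x y; rw [hrc]; exact h2


end AuxProof

/-- **Proposition 2.3, second bound.** There is a universal constant `C > 0` such that for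
every `n`, every `f : {0,1}ⁿ × {0,1}ⁿ → {0,1}` and every `δ ∈ (0,1)`,
`log srec_{δ,δ}(f) ≤ C · log(1/δ) · log prt_{1/8}(f)`. -/
theorem log_srec_le_log_prt :
    ∃ C : ℝ, 0 < C ∧
      ∀ (n : ℕ) (f : (Fin n → Bool) → (Fin n → Bool) → Bool) (δ : ℝ),
        δ ∈ Set.Ioo (0 : ℝ) 1 →
        Real.logb 2 (srec f δ δ) ≤
          C * Real.logb 2 (1 / δ) * Real.logb 2 (prt f (1/8)) := by
  refine ⟨4, by norm_num, ?_⟩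
  intro n f δ hδ
  obtain ⟨hδ0, hδ1⟩ := hδ
  have hlog1δ : 0 ≤ Real.logb 2 (1/δ) :=
    Real.logb_nonneg (by norm_num) (by rw [le_div_iff₀ hδ0]; linarith)
  have hSne := prtSet_nonempty f (ε := 1/8) (by norm_num)
  have hP1 : (1:ℝ) ≤ prt f (1/8) := by
    unfold prt
    exact le_csInf hSne fun v hv => mem_prtSet_one_le hv
  have hlogP : 0 ≤ Real.logb 2 (prt f (1/8)) := Real.logb_nonneg (by norm_num) hP1
  have hRHS : 0 ≤ 4 * Real.logb 2 (1/δ) * Real.logb 2 (prt f (1/8)) :=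
    mul_nonneg (mul_nonneg (by norm_num) hlog1δ) hlogP
  have hs0 : 0 ≤ srec f δ δ := by
    unfold srec
    exact le_trans (srecZ_nonneg f false δ δ) (le_max_left _ _)
  rcases le_or_gt (1/2 : ℝ) δ with hhalf | hhalf
  · -- trivial case: δ ≥ 1/2
    have hs1 : srec f δ δ ≤ δ := by
      unfold srec
      exact max_le (srecZ_le_self f hhalf hδ1.le false) (srecZ_le_self f hhalf hδ1.le true)
    have hlogs : Real.logb 2 (srec f δ δ) ≤ 0 :=
      Real.logb_nonpos (by norm_num) hs0 (le_trans hs1 hδ1.le)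
    linarith
  · -- main case: δ < 1/2
    have ht1 : 1 ≤ Real.logb 2 (1/δ) := by
      have h2δ : (2:ℝ) ≤ 1/δ := by rw [le_div_iff₀ hδ0]; linarith
      calc (1:ℝ) = Real.logb 2 2 := (Real.logb_self_eq_one (by norm_num)).symm
        _ ≤ Real.logb 2 (1/δ) :=
            (Real.logb_le_logb (b := 2) (by norm_num) (by norm_num) (by positivity)).2 h2δ
    set t := Real.logb 2 (1/δ) with ht
    set m := ⌈t⌉₊ with hmdef
    have hmt : t ≤ (m:ℝ) := Nat.le_ceil t
    have hmub : (m:ℝ) ≤ 2*t := by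
      have := Nat.ceil_lt_add_one (le_trans zero_le_one ht1)
      rw [← hmdef] at this
      linarith
    have hpow : ((2:ℝ))⁻¹ ^ m ≤ δ := by
      have h2m : 1/δ ≤ (2:ℝ) ^ m := by
        calc 1/δ = (2:ℝ) ^ t := (Real.rpow_logb (by norm_num) (by norm_num) (by positivity)).symm
          _ ≤ (2:ℝ) ^ (m:ℝ) := Real.rpow_le_rpow_of_exponent_le (by norm_num) hmt
          _ = (2:ℝ) ^ m := Real.rpow_natCast 2 m
      have h2mpos : (0:ℝ) < 2 ^ m := by positivity
      have h1 : 1 ≤ δ * 2 ^ m := by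
        rw [div_le_iff₀ hδ0] at h2m
        nlinarith
      rw [inv_pow]
      calc ((2:ℝ)^m)⁻¹ = ((2:ℝ)^m)⁻¹ * 1 := by ring
        _ ≤ ((2:ℝ)^m)⁻¹ * (δ * 2^m) := by
            exact mul_le_mul_of_nonneg_left h1 (by positivity)
        _ = δ := by field_simp
    have hkey : ∀ z : Bool, srecZ f z δ δ ≤ (prt f (1/8)) ^ (2*m) := by
      intro z
      unfold prt
      refine le_pow_csInf hSne (fun v hv => mem_prtSet_one_le hv) (2*m) ?_
      rintro v ⟨w, h0, h1c, h2c, rfl⟩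
      refine srecZ_le_pow f hδ0 w h0 ?_ h2c z m hpow
      intro x y
      have := h1c x y
      linarith
    have hsrec : srec f δ δ ≤ (prt f (1/8)) ^ (2*m) := by
      unfold srec
      exact max_le (hkey false) (hkey true)
    rcases eq_or_lt_of_le hs0 with h0eq | h0lt
    · rw [← h0eq, Real.logb_zero]
      exact hRHS
    · have hPpos : (0:ℝ) < prt f (1/8) := lt_of_lt_of_le one_pos hP1
      have hPpow : 0 < (prt f (1/8)) ^ (2*m) := by positivity
      have hlog2 := (Real.logb_le_logb (b := 2) (by norm_num) h0lt hPpow).2 hsrec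
      rw [Real.logb_pow] at hlog2
      have hcast : ((2*m : ℕ):ℝ) ≤ 4 * t := by push_cast; linarith
      calc Real.logb 2 (srec f δ δ) ≤ ((2*m:ℕ):ℝ) * Real.logb 2 (prt f (1/8)) := hlog2
        _ ≤ (4*t) * Real.logb 2 (prt f (1/8)) := mul_le_mul_of_nonneg_right hcast hlogP
        _ = 4 * Real.logb 2 (1/δ) * Real.logb 2 (prt f (1/8)) := by ring
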